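/- Let D = {z_{m_2}, ..., z_1, 0, c_1, ..., c_{m_1}} with z_{m_2} < ... < z_1 < 0 < c_1 < ... < c_{m_1}, and let w ≥ max( max_{0 ≤ i ≤ m_1−1} (c_{m_1} − c_i − z_{m_2})/(c_{i+1} − c_i), max_{1 ≤ i ≤ m_2} (−z_{m_2} + z_{i−1})/(−z_i + z_{i−1}) ) where c_0 = z_0 = 0. Then any q-ary additive (w,2d)-disjunct t×n matrix A determines every d-sparse vector x ∈ Dⁿ uniquely from Ax: if x, x' ∈ Dⁿ are d-sparse and Ax = Ax', then x = x'. -/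

import Mathlib

/-- Additive `(w,d)`-disjunct matrix. -/
def AddDisjunct {t n : ℕ} (M : Fin t → Fin n → ℝ) (w : ℝ) (d : ℕ) : Prop :=
  ∀ S : Finset (Fin n), S.card ≤ d → ∀ k ∉ S, ∃ i, M i k > w * ∑ j ∈ S, M i j

/-- Entries of `M` belong to `{0,1,...,q-1}`. -/
def QaryEntries {t n : ℕ} (M : Fin t → Fin n → ℝ) (q : ℕ) : Prop :=
  ∀ i j, ∃ a : ℕ, a < q ∧ M i j = a

/-- Theorem `general`: identification in the general case. -/
theorem general_identification (q t n m₁ m₂ d : ℕ) (hm₁ : 1 ≤ m₁) (hm₂ : 1 ≤ m₂)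
    (A : Fin t → Fin n → ℝ) (hq : QaryEntries A q)
    (c : Fin (m₁ + 1) → ℝ) (hc0 : c 0 = 0) (hcmono : StrictMono c)
    (z : Fin (m₂ + 1) → ℝ) (hz0 : z 0 = 0) (hzanti : StrictAnti z)
    (w : ℝ)
    (hwc : ∀ i : Fin m₁,
      (c (Fin.last m₁) - c i.castSucc - z (Fin.last m₂)) / (c i.succ - c i.castSucc) ≤ w)
    (hwz : ∀ i : Fin m₂,
      (-z (Fin.last m₂) + z i.castSucc) / (-z i.succ + z i.castSucc) ≤ w)
    (hdisj : AddDisjunct A w (2 * d))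
    (x x' : Fin n → ℝ)
    (halpha : ∀ j, x j ∈ Set.range c ∪ Set.range z)
    (halpha' : ∀ j, x' j ∈ Set.range c ∪ Set.range z)
    (hsparse : ∃ S : Finset (Fin n), S.card ≤ d ∧ ∀ j ∉ S, x j = 0)
    (hsparse' : ∃ S : Finset (Fin n), S.card ≤ d ∧ ∀ j ∉ S, x' j = 0)
    (houtcome : ∀ i, ∑ j, A i j * x j = ∑ j, A i j * x' j) :
    x = x' := by
  -- entries of A are nonnegative
  have hA : ∀ i j, 0 ≤ A i j := by
    intro i j
    obtain ⟨a, _, ha⟩ := hq i j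
    rw [ha]; positivity
  -- z (last m₂) < 0
  have hzneg : z (Fin.last m₂) < 0 := by
    have : z (Fin.last m₂) < z 0 := hzanti (by
      simp [Fin.lt_def, Fin.last]; omega)
    linarith [hz0 ▸ this]
  -- w ≥ 1
  have hw1 : (1 : ℝ) ≤ w := by
    set i : Fin m₁ := ⟨m₁ - 1, by omega⟩ with hi
    have hsucc : i.succ = Fin.last m₁ := by
      apply Fin.ext
      simp [hi, Fin.last]
      omega
    have hlt : c i.castSucc < c i.succ := hcmono Fin.castSucc_lt_succ
    have hden : (0 : ℝ) < c i.succ - c i.castSucc := by linarith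
    have key := hwc i
    rw [hsucc] at hden hlt key
    calc (1 : ℝ) ≤ (c (Fin.last m₁) - c i.castSucc - z (Fin.last m₂)) /
          (c (Fin.last m₁) - c i.castSucc) := by
          rw [le_div_iff₀ hden]; linarith
      _ ≤ w := by
          have := hwc i
          rwa [hsucc] at this
  -- main argument
  by_contra hne
  have hex : ∃ j, x j ≠ x' j := by
    by_contra h
    push_neg at h
    exact hne (funext h)
  obtain ⟨j₀, hj₀⟩ := hex
  obtain ⟨S₁, hS₁c, hS₁⟩ := hsparse
  obtain ⟨S₂, hS₂c, hS₂⟩ := hsparse'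
  -- pick k maximizing |x k - x' k|
  obtain ⟨k, -, hk⟩ := Finset.exists_max_image (Finset.univ : Finset (Fin n))
    (fun j => |x j - x' j|) ⟨j₀, Finset.mem_univ j₀⟩
  have hδpos : 0 < |x k - x' k| := by
    have h1 : 0 < |x j₀ - x' j₀| := abs_pos.mpr (sub_ne_zero.mpr hj₀)
    exact lt_of_lt_of_le h1 (hk j₀ (Finset.mem_univ j₀))
  have hkmem : k ∈ S₁ ∪ S₂ := by
    by_contra h
    rw [Finset.mem_union] at h
    push_neg at h
    have h1 := hS₁ k h.1
    have h2 := hS₂ k h.2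
    rw [h1, h2] at hδpos
    simp at hδpos
  set T := (S₁ ∪ S₂).erase k with hT
  have hTcard : T.card ≤ 2 * d := by
    have h1 : T.card ≤ (S₁ ∪ S₂).card := Finset.card_erase_le
    have h2 : (S₁ ∪ S₂).card ≤ S₁.card + S₂.card := Finset.card_union_le _ _
    omega
  have hkT : k ∉ T := Finset.notMem_erase k _
  obtain ⟨i, hi⟩ := hdisj T hTcard k hkT
  -- sum equation
  have hzero : ∑ j, A i j * (x j - x' j) = 0 := by
    have := houtcome i
    simp only [mul_sub]
    rw [Finset.sum_sub_distrib, this, sub_self]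
  have hsub : insert k T ⊆ Finset.univ := Finset.subset_univ _
  have hsum : ∑ j ∈ insert k T, A i j * (x j - x' j) = 0 := by
    rw [← hzero]
    apply Finset.sum_subset hsub
    intro j _ hj
    rw [Finset.mem_insert] at hj
    push_neg at hj
    have hjmem : j ∉ S₁ ∪ S₂ := by
      intro hmem
      exact hj.2 (Finset.mem_erase.mpr ⟨hj.1, hmem⟩)
    rw [Finset.mem_union] at hjmem
    push_neg at hjmem
    rw [hS₁ j hjmem.1, hS₂ j hjmem.2, sub_self, mul_zero]
  rw [Finset.sum_insert hkT] at hsum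
  -- bound
  have hbound : A i k * |x k - x' k| ≤ (∑ j ∈ T, A i j) * |x k - x' k| := by
    have h1 : A i k * (x k - x' k) = ∑ j ∈ T, A i j * (x' j - x j) := by
      have : ∑ j ∈ T, A i j * (x' j - x j) = -∑ j ∈ T, A i j * (x j - x' j) := by
        rw [← Finset.sum_neg_distrib]
        apply Finset.sum_congr rfl
        intro j _; ring
      rw [this]; linarith
    calc A i k * |x k - x' k| = |A i k * (x k - x' k)| := by
          rw [abs_mul, abs_of_nonneg (hA i k)]
      _ = |∑ j ∈ T, A i j * (x' j - x j)| := by rw [h1]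
      _ ≤ ∑ j ∈ T, |A i j * (x' j - x j)| := Finset.abs_sum_le_sum_abs _ _
      _ ≤ ∑ j ∈ T, A i j * |x k - x' k| := by
          apply Finset.sum_le_sum
          intro j _
          rw [abs_mul, abs_of_nonneg (hA i j)]
          apply mul_le_mul_of_nonneg_left _ (hA i j)
          calc |x' j - x j| = |x j - x' j| := abs_sub_comm _ _
            _ ≤ |x k - x' k| := hk j (Finset.mem_univ j)
      _ = (∑ j ∈ T, A i j) * |x k - x' k| := by rw [Finset.sum_mul]
  have hle : A i k ≤ ∑ j ∈ T, A i j :=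
    le_of_mul_le_mul_right hbound hδpos
  have hsnn : 0 ≤ ∑ j ∈ T, A i j := Finset.sum_nonneg fun j _ => hA i j
  nlinarith [hi]
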